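/- Let ξ > 0, let M ≥ 1 be an integer, and let E satisfy 0 ≤ E ≤ (1+ξ)/(1+3ξ). Then the minimum value of f_{M,ξ}(p) over all vectors p = (p_0, …, p_M) ∈ ℝ^{M+1} satisfying p_n ≥ 0 for all n, ∑_{n=0}^{M} p_n = 1, and ∑_{n=0}^{M} n·p_n ≤ E, equals (1/(1+ξ)) [ 1 − 2(ξ/(1+ξ))E + 2(ξ/(1+ξ))^2 E^2 ]. In particular, this value is independent of M. -/

import Mathlib

open Finset

/-- The objective function `f_{M,ξ}` of the unidirectional teleportation optimization:
`f_{M,ξ}(p) = (1/(1+ξ)) [ (∑_{n=0}^{M} p_n/(1+ξ)^n)^2 + (∑_{n=1}^{M} p_n ξ/(1+ξ)^n)^2 ]`. -/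
noncomputable def fUni (M : ℕ) (ξ : ℝ) (p : Fin (M + 1) → ℝ) : ℝ :=
  (1 / (1 + ξ)) *
    ((∑ n : Fin (M + 1), p n / (1 + ξ) ^ (n : ℕ)) ^ 2 +
      (∑ n : Fin (M + 1), if 1 ≤ (n : ℕ) then p n * ξ / (1 + ξ) ^ (n : ℕ) else 0) ^ 2)

/-- Feasibility: `p_n ≥ 0`, `∑ p_n = 1`, `∑ n p_n ≤ E`. -/
def FeasibleUni (M : ℕ) (E : ℝ) (p : Fin (M + 1) → ℝ) : Prop :=
  (∀ n, 0 ≤ p n) ∧ (∑ n, p n = 1) ∧ (∑ n : Fin (M + 1), ((n : ℕ) : ℝ) * p n ≤ E)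

lemma key_pow (ξ t : ℝ) (hξ : 0 < ξ) (ht0 : 0 ≤ t) (ht : t * (1 + 3 * ξ) ≤ ξ) :
    ∀ n : ℕ, 1 ≤ n →
      (1 - t) + n * (ξ / (1 + ξ)) * (2 * t - 1) ≤ (1 / (1 + ξ)) ^ n * (1 - t + t * ξ) := by
  have hs : (0:ℝ) < 1 + ξ := by linarith
  have ht2 : 2 * t ≤ 1 := by nlinarith
  intro n hn
  induction n, hn using Nat.le_induction with
  | base =>
    rw [pow_one, ← sub_nonneg]; push_cast
    have : 1 / (1 + ξ) * (1 - t + t * ξ) - ((1-t) + 1 * (ξ/(1+ξ)) * (2*t-1))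
        = (1/(1+ξ)) * ((1 - t + t*ξ) - (1+ξ)*(1-t) - ξ*(2*t-1)) := by
      field_simp; ring
    rw [this]
    have h0 : (1 - t + t*ξ) - (1+ξ)*(1-t) - ξ*(2*t-1) = 0 := by ring
    rw [h0, mul_zero]
  | succ n hn ih =>
    have hxle : (1 / (1 + ξ)) ^ n ≤ 1 / (1 + ξ) := by
      calc (1 / (1+ξ))^n ≤ (1/(1+ξ))^1 :=
            pow_le_pow_of_le_one (by positivity) (by rw [div_le_one hs]; linarith) hn
        _ = 1/(1+ξ) := pow_one _
    have hcoef : 0 ≤ 1 - t + t * ξ := by nlinarith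
    have hkey : (1/(1+ξ)) * (1 - t + t*ξ) ≤ 1 - 2*t := by
      rw [← sub_nonneg]
      have h2 : (1 - 2*t) - (1/(1+ξ)) * (1 - t + t*ξ)
          = (1/(1+ξ)) * (ξ - t*(1+3*ξ)) := by field_simp; ring
      rw [h2]
      have : 0 ≤ ξ - t*(1+3*ξ) := by linarith
      positivity
    have h1 : (ξ/(1+ξ)) * ((1/(1+ξ))^n * (1-t+t*ξ)) ≤ (ξ/(1+ξ)) * (1-2*t) := by
      apply mul_le_mul_of_nonneg_left _ (by positivity)
      calc (1/(1+ξ))^n * (1-t+t*ξ) ≤ (1/(1+ξ)) * (1-t+t*ξ) :=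
            mul_le_mul_of_nonneg_right hxle hcoef
        _ ≤ 1 - 2*t := hkey
    have hxeq : (1:ℝ)/(1+ξ) = 1 - ξ/(1+ξ) := by field_simp; ring
    rw [pow_succ]
    have h3 : (1/(1+ξ))^n * (1/(1+ξ)) * (1-t+t*ξ)
        = (1/(1+ξ))^n * (1-t+t*ξ) - (ξ/(1+ξ)) * ((1/(1+ξ))^n * (1-t+t*ξ)) := by
      rw [hxeq]; ring
    rw [h3]; push_cast; linarith

theorem unidirectional_optimal_value (ξ E : ℝ) (M : ℕ) (hξ : 0 < ξ)
    (hM : 1 ≤ M) (hE0 : 0 ≤ E) (hE : E ≤ (1 + ξ) / (1 + 3 * ξ)) :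
    IsLeast {y : ℝ | ∃ p : Fin (M + 1) → ℝ, FeasibleUni M E p ∧ fUni M ξ p = y}
      ((1 / (1 + ξ)) * (1 - 2 * (ξ / (1 + ξ)) * E + 2 * (ξ / (1 + ξ)) ^ 2 * E ^ 2)) := by
  have hs : (0:ℝ) < 1 + ξ := by linarith
  have h3s : (0:ℝ) < 1 + 3*ξ := by linarith
  have hE' : E * (1 + 3*ξ) ≤ 1 + ξ := by
    rw [div_eq_mul_inv] at hE
    calc E * (1+3*ξ) ≤ ((1+ξ) * (1+3*ξ)⁻¹) * (1+3*ξ) :=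
          mul_le_mul_of_nonneg_right hE (le_of_lt h3s)
      _ = 1 + ξ := by field_simp
  have hE1 : E ≤ 1 := by nlinarith
  set t : ℝ := ξ / (1+ξ) * E with htdef
  have ht0 : 0 ≤ t := by positivity
  have hinv : ξ / (1+ξ) * (1+ξ) = ξ := by field_simp
  have ht : t * (1 + 3*ξ) ≤ ξ := by
    have h := mul_le_mul_of_nonneg_left hE' (le_of_lt (div_pos hξ hs))
    calc t * (1+3*ξ) = ξ/(1+ξ) * (E * (1+3*ξ)) := by rw [htdef]; ring
      _ ≤ ξ/(1+ξ) * (1+ξ) := h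
      _ = ξ := hinv
  have ht2 : 2*t ≤ 1 := by nlinarith
  constructor
  · -- membership: p₀ = 1 - E, p₁ = E
    obtain ⟨m, rfl⟩ : ∃ m, M = m + 1 := ⟨M - 1, (Nat.succ_pred_eq_of_pos hM).symm⟩
    refine ⟨fun n => if (n:ℕ) = 0 then 1 - E else if (n:ℕ) = 1 then E else 0, ⟨?_, ?_, ?_⟩, ?_⟩
    · intro n
      dsimp only
      split
      · linarith
      · split
        · exact hE0
        · exact le_rfl
    · simp [Fin.sum_univ_succ]
    · simp [Fin.sum_univ_succ]
    · unfold fUni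
      have hA : (∑ n : Fin (m+1+1),
          (fun n : Fin (m+1+1) => if (n:ℕ) = 0 then 1 - E else if (n:ℕ) = 1 then E else 0) n
            / (1 + ξ) ^ (n:ℕ)) = 1 - E + E/(1+ξ) := by
        simp [Fin.sum_univ_succ]
      have hB : (∑ n : Fin (m+1+1), if 1 ≤ (n:ℕ) then
          (fun n : Fin (m+1+1) => if (n:ℕ) = 0 then 1 - E else if (n:ℕ) = 1 then E else 0) n
            * ξ / (1 + ξ) ^ (n:ℕ) else 0) = E * ξ/(1+ξ) := by
        simp [Fin.sum_univ_succ]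
      rw [hA, hB]
      have hne : (1+ξ) ≠ (0:ℝ) := ne_of_gt hs
      field_simp
      ring
  · -- lower bound
    rintro y ⟨p, ⟨hp0, hp1, hpE⟩, rfl⟩
    set A : ℝ := ∑ n : Fin (M + 1), p n / (1 + ξ) ^ (n : ℕ) with hAdef
    set B : ℝ := ∑ n : Fin (M + 1), (if 1 ≤ (n : ℕ) then p n * ξ / (1 + ξ) ^ (n : ℕ) else 0)
      with hBdef
    have hterm : ∀ n : Fin (M+1),
        (1-t) * p n + (ξ/(1+ξ)) * (2*t-1) * (((n:ℕ):ℝ) * p n)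
          ≤ (1-t) * (p n / (1+ξ)^(n:ℕ))
            + t * (if 1 ≤ (n:ℕ) then p n * ξ / (1+ξ)^(n:ℕ) else 0) := by
      intro n
      rcases Nat.eq_zero_or_pos (n:ℕ) with h0 | h1
      · rw [h0]
        norm_num
      · have h1' : 1 ≤ (n:ℕ) := h1
        rw [if_pos h1']
        have hk := key_pow ξ t hξ ht0 ht (n:ℕ) h1
        have hmul := mul_le_mul_of_nonneg_left hk (hp0 n)
        have e1 : (1-t) * p n + (ξ/(1+ξ)) * (2*t-1) * (((n:ℕ):ℝ) * p n)
            = p n * ((1-t) + ((n:ℕ):ℝ) * (ξ/(1+ξ)) * (2*t-1)) := by ring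
        have e2 : (1-t) * (p n / (1+ξ)^(n:ℕ)) + t * (p n * ξ / (1+ξ)^(n:ℕ))
            = p n * ((1/(1+ξ))^(n:ℕ) * (1 - t + t*ξ)) := by
          have hpow : ((1:ℝ)/(1+ξ))^(n:ℕ) = 1/(1+ξ)^(n:ℕ) := one_div_pow _ _
          rw [hpow]
          have hne : ((1+ξ):ℝ)^(n:ℕ) ≠ 0 := by positivity
          field_simp
        rw [e1, e2]
        exact hmul
    have hsum := Finset.sum_le_sum (s := Finset.univ) (fun n _ => hterm n)
    rw [Finset.sum_add_distrib, Finset.sum_add_distrib, ← Finset.mul_sum, ← Finset.mul_sum,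
      ← Finset.mul_sum, ← Finset.mul_sum, hp1, ← hAdef, ← hBdef] at hsum
    have hneg : (ξ/(1+ξ)) * (2*t-1) ≤ 0 := by
      apply mul_nonpos_of_nonneg_of_nonpos (by positivity)
      linarith
    have hlin : 1 - 2*t + 2*t^2 ≤ (1-t)*A + t*B := by
      have h4 : (ξ/(1+ξ)) * (2*t-1) * (∑ n : Fin (M+1), ((n:ℕ):ℝ) * p n)
          ≥ (ξ/(1+ξ)) * (2*t-1) * E := by
        exact mul_le_mul_of_nonpos_left hpE hneg
      have h5 : (ξ/(1+ξ)) * (2*t-1) * E = (2*t-1) * t := by rw [htdef]; ring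
      nlinarith [hsum, h4]
    have hKpos : (0:ℝ) < 1 - 2*t + 2*t^2 := by nlinarith [sq_nonneg (2*t-1)]
    have hABK : 1 - 2*t + 2*t^2 ≤ A^2 + B^2 := by
      nlinarith [sq_nonneg ((1-t)*B - t*A), hlin, hKpos,
        mul_self_le_mul_self (le_of_lt hKpos) hlin]
    unfold fUni
    have hval : 1 - 2 * (ξ/(1+ξ)) * E + 2 * (ξ/(1+ξ))^2 * E^2 = 1 - 2*t + 2*t^2 := by
      rw [htdef]; ring
    rw [hval]
    exact mul_le_mul_of_nonneg_left hABK (by positivity)
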